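/- For a > 0 and 1 < α < 2, ∫_a^∞ (e^{iky} − 1 − iky) y^{−(1+α)} dy = |k|^α Γ(−α) e^{−i sgn(k) πα/2} − ∑_{n≥2} (ik)^n a^{n−α} / ((n−α) Γ(n+1)), for all k ∈ ℝ. -/

import Mathlib

open Real MeasureTheory Set Filter Topology

noncomputable def myf (s : ℂ) (y : ℝ) : ℂ := Complex.exp (-(s * y)) - 1 + s * y

noncomputable def kerf (α : ℝ) (s : ℂ) (y : ℝ) : ℂ := myf s y * ((y ^ (-1 - α) : ℝ) : ℂ)

noncomputable def Jfun (α : ℝ) (s : ℂ) : ℂ := ∫ y in Ioi (0:ℝ), kerf α s y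

lemma bd1 {z : ℂ} (hz : 0 ≤ z.re) : ‖1 - Complex.exp (-z)‖ ≤ ‖z‖ := by
  have key : ∀ t ∈ Icc (0:ℝ) 1, HasDerivWithinAt (fun t : ℝ => Complex.exp (-(t • z)))
      (-z * Complex.exp (-((t:ℝ) • z))) (Icc 0 1) t := by
    intro t ht
    have h1 : HasDerivAt (fun t : ℝ => -(t • z)) (-z) t := by
      exact ((hasDerivAt_id t).smul_const z).neg.congr_deriv (by simp)
    simpa [mul_comm] using (h1.cexp).hasDerivWithinAt
  have bdd : ∀ t ∈ Icc (0:ℝ) 1, ‖-z * Complex.exp (-((t:ℝ) • z))‖ ≤ ‖z‖ := by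
    intro t ht
    rw [norm_mul, norm_neg]
    have : ‖Complex.exp (-((t:ℝ) • z))‖ ≤ 1 := by
      rw [Complex.norm_exp]
      simp only [Complex.neg_re, Complex.real_smul, Complex.mul_re, Complex.ofReal_re,
        Complex.ofReal_im]
      have : 0 ≤ t * z.re := mul_nonneg ht.1 hz
      calc Real.exp (-(t * z.re - 0 * z.im)) ≤ Real.exp 0 := by
            apply Real.exp_le_exp.2; simp; linarith
        _ = 1 := Real.exp_zero
    calc ‖z‖ * ‖Complex.exp (-((t:ℝ) • z))‖ ≤ ‖z‖ * 1 := by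
          exact mul_le_mul_of_nonneg_left this (norm_nonneg _)
      _ = ‖z‖ := mul_one _
  have := (convex_Icc (0:ℝ) 1).norm_image_sub_le_of_norm_hasDerivWithin_le key bdd
    (left_mem_Icc.2 zero_le_one) (right_mem_Icc.2 zero_le_one)
  rw [norm_sub_rev]
  simpa using this

lemma bd2 {z : ℂ} (hz : 0 ≤ z.re) : ‖Complex.exp (-z) - 1 + z‖ ≤ ‖z‖ ^ 2 := by
  have key : ∀ t ∈ Icc (0:ℝ) 1, HasDerivWithinAt
      (fun t : ℝ => Complex.exp (-(t • z)) - 1 + t • z)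
      (z * (1 - Complex.exp (-((t:ℝ) • z)))) (Icc 0 1) t := by
    intro t ht
    have h1 : HasDerivAt (fun t : ℝ => -(t • z)) (-z) t := by
      exact ((hasDerivAt_id t).smul_const z).neg.congr_deriv (by simp)
    have h2 : HasDerivAt (fun t : ℝ => Complex.exp (-(t • z))) (Complex.exp (-((t:ℝ) • z)) * (-z)) t :=
      h1.cexp
    have h3 : HasDerivAt (fun t : ℝ => t • z) z t := by
      simpa using (hasDerivAt_id t).smul_const z
    have := (h2.sub_const 1).add h3
    refine this.hasDerivWithinAt.congr_deriv ?_
    ring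
  have bdd : ∀ t ∈ Icc (0:ℝ) 1, ‖z * (1 - Complex.exp (-((t:ℝ) • z)))‖ ≤ ‖z‖ ^ 2 := by
    intro t ht
    rw [norm_mul]
    have h4 : 0 ≤ ((t:ℝ) • z).re := by
      rw [Complex.real_smul, Complex.mul_re]
      simp only [Complex.ofReal_re, Complex.ofReal_im]
      have := mul_nonneg ht.1 hz
      simpa using this
    have h5 : ‖1 - Complex.exp (-((t:ℝ) • z))‖ ≤ ‖(t:ℝ) • z‖ := bd1 h4
    have h6 : ‖(t:ℝ) • z‖ ≤ ‖z‖ := by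
      rw [norm_smul]
      simp only [Real.norm_eq_abs, abs_of_nonneg ht.1]
      nlinarith [norm_nonneg z, ht.2, ht.1]
    calc ‖z‖ * ‖1 - Complex.exp (-((t:ℝ) • z))‖ ≤ ‖z‖ * ‖z‖ :=
          mul_le_mul_of_nonneg_left (h5.trans h6) (norm_nonneg _)
      _ = ‖z‖ ^ 2 := (sq ‖z‖).symm
  have := (convex_Icc (0:ℝ) 1).norm_image_sub_le_of_norm_hasDerivWithin_le key bdd
    (left_mem_Icc.2 zero_le_one) (right_mem_Icc.2 zero_le_one)
  simpa using this

lemma bd3 {z : ℂ} (hz : 0 ≤ z.re) : ‖Complex.exp (-z) - 1 + z‖ ≤ 2 + ‖z‖ := by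
  have h1 : ‖Complex.exp (-z)‖ ≤ 1 := by
    rw [Complex.norm_exp]
    have : (-z).re ≤ 0 := by simpa using hz
    calc Real.exp (-z).re ≤ Real.exp 0 := Real.exp_le_exp.2 this
      _ = 1 := Real.exp_zero
  calc ‖Complex.exp (-z) - 1 + z‖ ≤ ‖Complex.exp (-z) - 1‖ + ‖z‖ := norm_add_le _ _
    _ ≤ (‖Complex.exp (-z)‖ + ‖(1:ℂ)‖) + ‖z‖ := by
        exact add_le_add_left (norm_sub_le _ _) _
    _ ≤ 2 + ‖z‖ := by rw [norm_one]; linarith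

noncomputable def bFn (α c₁ c₂ : ℝ) (y : ℝ) : ℝ :=
  if y ≤ 1 then c₁ * y ^ (1 - α) else c₂ * y ^ (-α)

lemma bFn_int {α : ℝ} (hα : α ∈ Set.Ioo (1:ℝ) 2) (c₁ c₂ : ℝ) :
    IntegrableOn (bFn α c₁ c₂) (Ioi (0:ℝ)) := by
  rw [← Ioc_union_Ioi_eq_Ioi (zero_le_one (α := ℝ))]
  apply IntegrableOn.union
  · have h1 : IntegrableOn (fun y : ℝ => c₁ * y ^ (1 - α)) (Ioc (0:ℝ) 1) := by
      have := intervalIntegral.intervalIntegrable_rpow' (a := 0) (b := 1)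
        (show (-1:ℝ) < 1 - α by linarith [hα.2])
      rw [intervalIntegrable_iff_integrableOn_Ioc_of_le zero_le_one] at this
      exact this.const_mul c₁
    apply h1.congr_fun _ measurableSet_Ioc
    intro y hy
    simp [bFn, hy.2]
  · have h1 : IntegrableOn (fun y : ℝ => c₂ * y ^ (-α)) (Ioi (1:ℝ)) :=
      (integrableOn_Ioi_rpow_of_lt (by linarith [hα.1]) zero_lt_one).const_mul c₂
    apply h1.congr_fun _ measurableSet_Ioi
    intro y hy
    simp only [bFn, if_neg (not_le.2 (mem_Ioi.1 hy))]

lemma kerf_meas (α : ℝ) (s : ℂ) : AEStronglyMeasurable (kerf α s) (volume.restrict (Ioi 0)) := by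
  apply Measurable.aestronglyMeasurable
  unfold kerf myf
  fun_prop

lemma kerf_bound {α M : ℝ} (hα : α ∈ Set.Ioo (1:ℝ) 2) {s : ℂ} (hs : 0 ≤ s.re) (hM : ‖s‖ ≤ M)
    {y : ℝ} (hy : y ∈ Ioi (0:ℝ)) : ‖kerf α s y‖ ≤ bFn α (M^2) (2 + M) y := by
  have hy0 : (0:ℝ) < y := hy
  have hsy : 0 ≤ (s * y).re := by
    rw [Complex.mul_re]
    simp only [Complex.ofReal_re, Complex.ofReal_im, mul_zero, sub_zero]
    exact mul_nonneg hs hy0.le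
  have hnorm : ‖(s * (y:ℂ))‖ = ‖s‖ * y := by
    rw [norm_mul, Complex.norm_real, Real.norm_eq_abs, abs_of_pos hy0]
  have hMnn : 0 ≤ M := le_trans (norm_nonneg s) hM
  have hker : ‖kerf α s y‖ = ‖myf s y‖ * y ^ (-1 - α) := by
    rw [kerf, norm_mul, Complex.norm_real, Real.norm_eq_abs,
      abs_of_nonneg (Real.rpow_nonneg hy0.le _)]
  rw [hker]
  by_cases h1 : y ≤ 1
  · rw [bFn, if_pos h1]
    have h2 : ‖myf s y‖ ≤ (M * y) ^ 2 := by
      calc ‖myf s y‖ ≤ ‖s * (y:ℂ)‖ ^ 2 := bd2 hsy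
        _ = (‖s‖ * y) ^ 2 := by rw [hnorm]
        _ ≤ (M * y) ^ 2 := by
            apply pow_le_pow_left₀ (by positivity)
            exact mul_le_mul_of_nonneg_right hM hy0.le
    calc ‖myf s y‖ * y ^ (-1 - α) ≤ (M * y) ^ 2 * y ^ (-1 - α) :=
          mul_le_mul_of_nonneg_right h2 (Real.rpow_nonneg hy0.le _)
      _ = M ^ 2 * y ^ (1 - α) := by
          rw [mul_pow, mul_assoc]
          congr 1
          rw [← Real.rpow_natCast y 2, ← Real.rpow_add hy0]
          congr 1
          push_cast; ring
  · rw [bFn, if_neg h1]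
    push_neg at h1
    have h2 : ‖myf s y‖ ≤ (2 + M) * y := by
      have hb := bd3 hsy
      rw [hnorm] at hb
      have h3 : ‖s‖ * y ≤ M * y := mul_le_mul_of_nonneg_right hM hy0.le
      have : (2:ℝ) ≤ 2 * y := by linarith
      calc ‖myf s y‖ ≤ 2 + ‖s‖ * y := hb
        _ ≤ 2 * y + M * y := by linarith
        _ = (2 + M) * y := by ring
    calc ‖myf s y‖ * y ^ (-1 - α) ≤ (2 + M) * y * y ^ (-1 - α) :=
          mul_le_mul_of_nonneg_right h2 (Real.rpow_nonneg hy0.le _)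
      _ = (2 + M) * y ^ (-α) := by
          rw [mul_assoc]
          congr 1
          nth_rewrite 1 [← Real.rpow_one y]
          rw [← Real.rpow_add hy0]
          congr 1
          ring

lemma kerf_int {α : ℝ} (hα : α ∈ Set.Ioo (1:ℝ) 2) {s : ℂ} (hs : 0 ≤ s.re) :
    IntegrableOn (kerf α s) (Ioi (0:ℝ)) := by
  apply Integrable.mono (bFn_int hα (‖s‖^2) (2 + ‖s‖)) (kerf_meas α s)
  filter_upwards [ae_restrict_mem measurableSet_Ioi] with y hy
  rw [Real.norm_eq_abs]
  have h := kerf_bound hα hs le_rfl hy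
  have h2 : 0 ≤ bFn α (‖s‖^2) (2+‖s‖) y := le_trans (norm_nonneg _) h
  rwa [abs_of_nonneg h2]

noncomputable def kerD (α : ℝ) (s : ℂ) (y : ℝ) : ℂ :=
  ((y:ℂ) * (1 - Complex.exp (-(s * y)))) * ((y ^ (-1 - α) : ℝ) : ℂ)

lemma kerf_hasDeriv (α : ℝ) (y : ℝ) (s : ℂ) :
    HasDerivAt (fun s => kerf α s y) (kerD α s y) s := by
  unfold kerf myf kerD
  have h1 : HasDerivAt (fun s : ℂ => -(s * y)) (-(y:ℂ)) s := by
    exact ((hasDerivAt_id s).mul_const (y:ℂ)).neg.congr_deriv (by simp)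
  have h2 : HasDerivAt (fun s : ℂ => Complex.exp (-(s * y)))
      (Complex.exp (-(s*y)) * -(y:ℂ)) s := h1.cexp
  have h3 : HasDerivAt (fun s : ℂ => s * y) (y:ℂ) s := by
    simpa using (hasDerivAt_id s).mul_const (y:ℂ)
  have := ((h2.sub_const 1).add h3).mul_const (((y ^ (-1 - α) : ℝ) : ℂ))
  refine this.congr_deriv ?_
  ring

lemma kerD_meas (α : ℝ) (s : ℂ) : AEStronglyMeasurable (kerD α s) (volume.restrict (Ioi 0)) := by
  apply Measurable.aestronglyMeasurable
  unfold kerD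
  fun_prop

lemma kerD_bound {α M : ℝ} {s : ℂ} (hs : 0 ≤ s.re) (hM : ‖s‖ ≤ M)
    {y : ℝ} (hy : y ∈ Ioi (0:ℝ)) : ‖kerD α s y‖ ≤ bFn α M 2 y := by
  have hy0 : (0:ℝ) < y := hy
  have hsy : 0 ≤ (s * y).re := by
    rw [Complex.mul_re]
    simp only [Complex.ofReal_re, Complex.ofReal_im, mul_zero, sub_zero]
    exact mul_nonneg hs hy0.le
  have hMnn : 0 ≤ M := le_trans (norm_nonneg s) hM
  have hker : ‖kerD α s y‖ = y * ‖1 - Complex.exp (-(s * y))‖ * y ^ (-1 - α) := by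
    rw [kerD, norm_mul, norm_mul, Complex.norm_real, Complex.norm_real, Real.norm_eq_abs,
      Real.norm_eq_abs, abs_of_pos hy0, abs_of_nonneg (Real.rpow_nonneg hy0.le _)]
  rw [hker]
  by_cases h1 : y ≤ 1
  · rw [bFn, if_pos h1]
    have h2 : ‖1 - Complex.exp (-(s * y))‖ ≤ M * y := by
      calc ‖1 - Complex.exp (-(s * y))‖ ≤ ‖s * (y:ℂ)‖ := bd1 hsy
        _ = ‖s‖ * y := by
            rw [norm_mul, Complex.norm_real, Real.norm_eq_abs, abs_of_pos hy0]
        _ ≤ M * y := mul_le_mul_of_nonneg_right hM hy0.le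
    calc y * ‖1 - Complex.exp (-(s * y))‖ * y ^ (-1 - α)
        ≤ y * (M * y) * y ^ (-1 - α) := by
          apply mul_le_mul_of_nonneg_right _ (Real.rpow_nonneg hy0.le _)
          exact mul_le_mul_of_nonneg_left h2 hy0.le
      _ = M * (y ^ (2:ℝ) * y ^ (-1 - α)) := by
          rw [show y ^ (2:ℝ) = y * y by
            rw [show (2:ℝ) = (2:ℕ) by norm_num, Real.rpow_natCast]; ring]
          ring
      _ = M * y ^ (1 - α) := by
          rw [← Real.rpow_add hy0]; congr 1; ring
  · rw [bFn, if_neg h1]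
    push_neg at h1
    have hexp : ‖Complex.exp (-(s * y))‖ ≤ 1 := by
      rw [Complex.norm_exp]
      have : (-(s * (y:ℂ))).re ≤ 0 := by simpa using hsy
      calc Real.exp (-(s * (y:ℂ))).re ≤ Real.exp 0 := Real.exp_le_exp.2 this
        _ = 1 := Real.exp_zero
    have h2 : ‖1 - Complex.exp (-(s * y))‖ ≤ 2 := by
      calc ‖1 - Complex.exp (-(s * y))‖ ≤ ‖(1:ℂ)‖ + ‖Complex.exp (-(s * y))‖ := norm_sub_le _ _
        _ ≤ 1 + 1 := by rw [norm_one]; linarith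
        _ = 2 := by norm_num
    calc y * ‖1 - Complex.exp (-(s * y))‖ * y ^ (-1 - α)
        ≤ y * 2 * y ^ (-1 - α) := by
          apply mul_le_mul_of_nonneg_right _ (Real.rpow_nonneg hy0.le _)
          exact mul_le_mul_of_nonneg_left h2 hy0.le
      _ = 2 * (y ^ (1:ℝ) * y ^ (-1 - α)) := by rw [Real.rpow_one]; ring
      _ = 2 * y ^ (-α) := by rw [← Real.rpow_add hy0]; congr 1; ring

lemma kerD_int {α : ℝ} (hα : α ∈ Set.Ioo (1:ℝ) 2) {s : ℂ} (hs : 0 ≤ s.re) :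
    IntegrableOn (kerD α s) (Ioi (0:ℝ)) := by
  apply Integrable.mono (bFn_int hα ‖s‖ 2) (kerD_meas α s)
  filter_upwards [ae_restrict_mem measurableSet_Ioi] with y hy
  rw [Real.norm_eq_abs]
  have h := kerD_bound (α := α) hs le_rfl hy
  rwa [abs_of_nonneg (le_trans (norm_nonneg _) h)]

noncomputable def JD (α : ℝ) (s : ℂ) : ℂ := ∫ y in Ioi (0:ℝ), kerD α s y

lemma Jfun_hasDeriv {α : ℝ} (hα : α ∈ Set.Ioo (1:ℝ) 2) {s₀ : ℂ} (hs₀ : 0 < s₀.re) :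
    HasDerivAt (Jfun α) (JD α s₀) s₀ := by
  set ε := s₀.re / 2 with hε
  have hεpos : 0 < ε := by positivity
  set M : ℝ := ‖s₀‖ + ε with hMdef
  have key : ∀ s ∈ Metric.ball s₀ ε, 0 ≤ s.re ∧ ‖s‖ ≤ M := by
    intro s hsball
    have hd : ‖s - s₀‖ < ε := by
      rw [← dist_eq_norm]; exact Metric.mem_ball.1 hsball
    constructor
    · have : |s.re - s₀.re| ≤ ‖s - s₀‖ := by
        rw [← Complex.sub_re]; exact Complex.abs_re_le_norm _
      have := abs_le.1 (this.trans hd.le)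
      linarith [this.1, hs₀]
    · calc ‖s‖ = ‖s₀ + (s - s₀)‖ := by ring_nf
        _ ≤ ‖s₀‖ + ‖s - s₀‖ := norm_add_le _ _
        _ ≤ M := by rw [hMdef]; linarith
  have := hasDerivAt_integral_of_dominated_loc_of_deriv_le (𝕜 := ℂ)
    (F := fun s y => kerf α s y) (F' := fun s y => kerD α s y)
    (bound := bFn α M 2) (Metric.ball_mem_nhds s₀ hεpos)
    (Eventually.of_forall (fun s => kerf_meas α s))
    (kerf_int hα hs₀.le)
    (kerD_meas α s₀)
    ?_ (bFn_int hα M 2) ?_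
  · exact this.2
  · filter_upwards [ae_restrict_mem measurableSet_Ioi] with y hy
    intro s hsball
    exact kerD_bound (key s hsball).1 (key s hsball).2 hy
  · filter_upwards [ae_restrict_mem measurableSet_Ioi] with y hy
    intro s _
    exact kerf_hasDeriv α y s

lemma kerf_scale {α : ℝ} (s : ℂ) {t y : ℝ} (ht : 0 < t) (hy : 0 < y) :
    kerf α ((t:ℂ) * s) y = ((t ^ (1+α) : ℝ) : ℂ) * kerf α s (t * y) := by
  have h2 : ((t * y) ^ (-1 - α) : ℝ) = t ^ (-1 - α) * y ^ (-1 - α) :=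
    Real.mul_rpow ht.le hy.le
  have hmyf : myf ((t:ℂ) * s) y = myf s (t * y) := by
    unfold myf
    push_cast
    ring_nf
  have h4 : ((t ^ (1+α) : ℝ) : ℂ) * ((t ^ (-1-α) : ℝ) : ℂ) = 1 := by
    rw [← Complex.ofReal_mul, ← Real.rpow_add ht]
    norm_num
  rw [kerf, kerf, hmyf, h2, Complex.ofReal_mul]
  calc myf s (t * y) * ((y ^ (-1-α) : ℝ) : ℂ)
      = (((t ^ (1+α) : ℝ) : ℂ) * ((t ^ (-1-α) : ℝ) : ℂ)) *
        (myf s (t * y) * ((y ^ (-1-α) : ℝ) : ℂ)) := by rw [h4]; ring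
    _ = ((t ^ (1+α) : ℝ) : ℂ) * (myf s (t * y) * (((t ^ (-1-α) : ℝ) : ℂ) * ((y ^ (-1-α) : ℝ) : ℂ))) := by
        ring

lemma Jfun_scale {α : ℝ} (s : ℂ) {t : ℝ} (ht : 0 < t) :
    Jfun α ((t:ℂ) * s) = ((t ^ α : ℝ) : ℂ) * Jfun α s := by
  have step1 : Jfun α ((t:ℂ) * s) = ∫ y in Ioi (0:ℝ), ((t ^ (1+α) : ℝ) : ℂ) * kerf α s (t * y) := by
    rw [Jfun]
    apply setIntegral_congr_fun measurableSet_Ioi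
    intro y hy
    exact kerf_scale s ht hy
  rw [step1, integral_const_mul]
  have := integral_comp_mul_left_Ioi (kerf α s) 0 ht
  rw [mul_zero] at this
  rw [this, Jfun]
  rw [Complex.real_smul, ← mul_assoc, ← Complex.ofReal_mul]
  congr 2
  rw [← Real.rpow_neg_one t, ← Real.rpow_add ht]
  congr 1
  ring

lemma Jfun_ode {α : ℝ} (hα : α ∈ Set.Ioo (1:ℝ) 2) {s : ℂ} (hs : 0 < s.re) :
    s * JD α s = (α:ℂ) * Jfun α s := by
  have hg : HasDerivAt (fun t : ℝ => (t:ℂ) * s) s 1 := by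
    simpa using ((hasDerivAt_id (1:ℝ)).ofReal_comp.mul_const s)
  have h1s : (((1:ℝ):ℂ)) * s = s := by norm_num
  have hJd : HasDerivAt (Jfun α) (JD α s) ((fun t : ℝ => (t:ℂ) * s) 1) := by
    simp only [h1s, Complex.ofReal_one, one_mul]
    exact Jfun_hasDeriv hα hs
  have hφ : HasDerivAt ((Jfun α) ∘ (fun t : ℝ => (t:ℂ) * s)) (s • JD α s) 1 :=
    HasDerivAt.scomp 1 hJd hg
  have hψ : HasDerivAt (fun t : ℝ => ((t ^ α : ℝ):ℂ) * Jfun α s) ((α:ℂ) * Jfun α s) 1 := by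
    have h := Real.hasDerivAt_rpow_const (x := (1:ℝ)) (p := α) (Or.inl one_ne_zero)
    have h2 := (h.ofReal_comp).mul_const (Jfun α s)
    simpa using h2
  have heq : (fun t : ℝ => ((t ^ α : ℝ):ℂ) * Jfun α s) =ᶠ[nhds (1:ℝ)]
      ((Jfun α) ∘ (fun t : ℝ => (t:ℂ) * s)) := by
    filter_upwards [eventually_gt_nhds zero_lt_one] with t ht
    exact (Jfun_scale s ht).symm
  have hφ2 : HasDerivAt ((Jfun α) ∘ (fun t : ℝ => (t:ℂ) * s)) ((α:ℂ) * Jfun α s) 1 :=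
    hψ.congr_of_eventuallyEq heq.symm
  have := hφ.unique hφ2
  rw [← this, smul_eq_mul]

lemma Jfun_eq_cpow {α : ℝ} (hα : α ∈ Set.Ioo (1:ℝ) 2) {s : ℂ} (hs : 0 < s.re) :
    Jfun α s = Jfun α 1 * s ^ (α:ℂ) := by
  set H : ℂ → ℂ := fun w => Jfun α w * w ^ (-(α:ℂ)) with hH
  set U : Set ℂ := {z | 0 < z.re} with hU
  have hUopen : IsOpen U := (isOpen_lt continuous_const Complex.continuous_re)
  have hUconv : Convex ℝ U := convex_halfSpace_re_gt 0
  have key : ∀ z ∈ U, HasDerivAt H 0 z := by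
    intro z hz
    have hzre : 0 < z.re := hz
    have hz0 : z ≠ 0 := by
      intro h
      rw [h] at hzre
      simp at hzre
    have hslit : z ∈ Complex.slitPlane := Complex.mem_slitPlane_iff.2 (Or.inl hzre)
    have hJ := Jfun_hasDeriv hα hzre
    have hpow : HasDerivAt (fun w : ℂ => w ^ (-(α:ℂ))) (-(α:ℂ) * z ^ (-(α:ℂ) - 1) * 1) z :=
      (hasDerivAt_id z).cpow_const hslit
    have hprod := hJ.mul hpow
    refine hprod.congr_deriv (Eq.symm ?_)
    have hode := Jfun_ode hα hzre
    have hz1 : z ^ (-(α:ℂ) - 1) = z ^ (-(α:ℂ)) * z⁻¹ := by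
      rw [show -(α:ℂ) - 1 = -(α:ℂ) + (-1) by ring, Complex.cpow_add _ _ hz0]
      congr 1
      rw [Complex.cpow_neg, Complex.cpow_one]
    rw [hz1]
    have hzinv : z * z⁻¹ = 1 := mul_inv_cancel₀ hz0
    linear_combination (-(z ^ (-(α:ℂ))) * z⁻¹) * hode +
      (z ^ (-(α:ℂ)) * JD α z) * hzinv
  have hdiff : DifferentiableOn ℂ H U := fun z hz =>
    ((key z hz).differentiableAt).differentiableWithinAt
  have hfd : ∀ z ∈ U, fderivWithin ℂ H U z = 0 := by
    intro z hz
    rw [fderivWithin_of_isOpen hUopen hz, (key z hz).hasFDerivAt.fderiv]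
    ext w
    simp
  have hsU : s ∈ U := hs
  have h1U : (1:ℂ) ∈ U := by simp [hU]
  have hconst : H s = H 1 := hUconv.is_const_of_fderivWithin_eq_zero hdiff hfd hsU h1U
  have hH1 : H 1 = Jfun α 1 := by
    rw [hH]
    simp [Complex.one_cpow]
  have hz0 : s ≠ 0 := by
    intro h
    rw [h] at hs
    simp at hs
  have hpow_ne : s ^ ((α:ℂ)) ≠ 0 := by
    intro h
    exact hz0 ((Complex.cpow_eq_zero_iff _ _).1 h).1
  calc Jfun α s = Jfun α s * ((s ^ ((α:ℂ)))⁻¹ * s ^ ((α:ℂ))) := by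
        rw [inv_mul_cancel₀ hpow_ne, mul_one]
    _ = (Jfun α s * s ^ (-(α:ℂ))) * s ^ ((α:ℂ)) := by rw [Complex.cpow_neg]; ring
    _ = Jfun α 1 * s ^ ((α:ℂ)) := by
        rw [show Jfun α s * s ^ (-(α:ℂ)) = H s from rfl, hconst, hH1]

noncomputable def kerDD (α : ℝ) (s : ℂ) (y : ℝ) : ℂ :=
  Complex.exp (-(s * y)) * ((y ^ (1 - α) : ℝ) : ℂ)

lemma kerD_hasDeriv (α : ℝ) {y : ℝ} (hy : 0 < y) (s : ℂ) :
    HasDerivAt (fun s => kerD α s y) (kerDD α s y) s := by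
  have h1 : HasDerivAt (fun s : ℂ => -(s * y)) (-(y:ℂ)) s := by
    exact ((hasDerivAt_id s).mul_const (y:ℂ)).neg.congr_deriv (by simp)
  have h2 : HasDerivAt (fun s : ℂ => 1 - Complex.exp (-(s * y)))
      (Complex.exp (-(s*y)) * (y:ℂ)) s := by
    have := (h1.cexp).const_sub 1
    refine this.congr_deriv ?_
    ring
  have h3 := (h2.const_mul (y:ℂ)).mul_const (((y ^ (-1 - α) : ℝ) : ℂ))
  refine h3.congr_deriv (Eq.symm ?_)
  unfold kerDD
  have hyr : ((y:ℂ)) * (Complex.exp (-(s*y)) * (y:ℂ)) * ((y ^ (-1 - α):ℝ):ℂ)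
      = Complex.exp (-(s*y)) * (((y:ℂ))^2 * ((y ^ (-1 - α):ℝ):ℂ)) := by ring
  rw [hyr]
  congr 1
  rw [show ((y:ℂ))^2 = (((y^(2:ℕ) : ℝ)):ℂ) by push_cast; ring, ← Complex.ofReal_mul]
  congr 1
  rw [← Real.rpow_natCast y 2, ← Real.rpow_add hy]
  congr 1
  push_cast
  ring

lemma kerDD_meas (α : ℝ) (s : ℂ) : AEStronglyMeasurable (kerDD α s) (volume.restrict (Ioi 0)) := by
  apply Measurable.aestronglyMeasurable
  unfold kerDD
  fun_prop

lemma kerDD_bound {α σ : ℝ} {s : ℂ} (hs : σ ≤ s.re) {y : ℝ} (hy : y ∈ Ioi (0:ℝ)) :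
    ‖kerDD α s y‖ ≤ Real.exp (-σ * y) * y ^ (1 - α) := by
  have hy0 : (0:ℝ) < y := hy
  rw [kerDD, norm_mul, Complex.norm_real, Real.norm_eq_abs,
    abs_of_nonneg (Real.rpow_nonneg hy0.le _)]
  apply mul_le_mul_of_nonneg_right _ (Real.rpow_nonneg hy0.le _)
  rw [Complex.norm_exp]
  apply Real.exp_le_exp.2
  rw [Complex.neg_re, Complex.mul_re]
  simp only [Complex.ofReal_re, Complex.ofReal_im, mul_zero, sub_zero]
  have := mul_le_mul_of_nonneg_right hs hy0.le
  linarith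

lemma bndD_int {α : ℝ} (hα : α ∈ Set.Ioo (1:ℝ) 2) {σ : ℝ} (hσ : 0 < σ) :
    IntegrableOn (fun y : ℝ => Real.exp (-σ * y) * y ^ (1 - α)) (Ioi (0:ℝ)) := by
  have := integrableOn_rpow_mul_exp_neg_mul_rpow (p := 1) (s := 1 - α) (b := σ)
    (by linarith [hα.2]) zero_lt_one hσ
  apply this.congr_fun _ measurableSet_Ioi
  intro y hy
  dsimp only
  rw [Real.rpow_one]
  ring

lemma JD_hasDeriv {α : ℝ} (hα : α ∈ Set.Ioo (1:ℝ) 2) {s₀ : ℂ} (hs₀ : 0 < s₀.re) :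
    HasDerivAt (JD α) (∫ y in Ioi (0:ℝ), kerDD α s₀ y) s₀ := by
  set ε := s₀.re / 2 with hε
  have hεpos : 0 < ε := by positivity
  have key : ∀ s ∈ Metric.ball s₀ ε, ε ≤ s.re := by
    intro s hsball
    have hd : ‖s - s₀‖ < ε := by
      rw [← dist_eq_norm]; exact Metric.mem_ball.1 hsball
    have : |s.re - s₀.re| ≤ ‖s - s₀‖ := by
      rw [← Complex.sub_re]; exact Complex.abs_re_le_norm _
    have := abs_le.1 (this.trans hd.le)
    rw [hε] at *
    linarith [this.1]
  have := hasDerivAt_integral_of_dominated_loc_of_deriv_le (𝕜 := ℂ)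
    (F := fun s y => kerD α s y) (F' := fun s y => kerDD α s y)
    (bound := fun y => Real.exp (-ε * y) * y ^ (1 - α)) (Metric.ball_mem_nhds s₀ hεpos)
    (Eventually.of_forall (fun s => kerD_meas α s))
    (kerD_int hα hs₀.le)
    (kerDD_meas α s₀)
    ?_ (bndD_int hα hεpos) ?_
  · exact this.2
  · filter_upwards [ae_restrict_mem measurableSet_Ioi] with y hy
    intro s hsball
    exact kerDD_bound (key s hsball) hy
  · filter_upwards [ae_restrict_mem measurableSet_Ioi] with y hy
    intro s _
    exact kerD_hasDeriv α (mem_Ioi.1 hy) s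

lemma kerDD_integral_real {α : ℝ} (hα : α ∈ Set.Ioo (1:ℝ) 2) {σ : ℝ} (hσ : 0 < σ) :
    (∫ y in Ioi (0:ℝ), kerDD α (σ:ℂ) y)
      = ((σ ^ (α - 2) * Real.Gamma (2 - α) : ℝ) : ℂ) := by
  have ha : 0 < (((2 - α : ℝ):ℂ)).re := by simp; linarith [hα.2]
  have key := Complex.integral_cpow_mul_exp_neg_mul_Ioi (a := ((2 - α : ℝ):ℂ)) ha hσ
  have hleft : (∫ y in Ioi (0:ℝ), kerDD α (σ:ℂ) y)
      = ∫ t in Ioi (0:ℝ), (t:ℂ) ^ (((2 - α : ℝ):ℂ) - 1) * Complex.exp (-((σ:ℂ) * t)) := by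
    apply setIntegral_congr_fun measurableSet_Ioi
    intro t ht
    have ht0 : (0:ℝ) < t := ht
    dsimp only
    rw [kerDD]
    rw [show (((2 - α : ℝ):ℂ) - 1) = ((1 - α : ℝ):ℂ) by push_cast; ring,
      Complex.ofReal_cpow ht0.le]
    ring
  rw [hleft, key]
  have h1 : (1 / (σ:ℂ)) = (((1/σ : ℝ)):ℂ) := by push_cast; ring
  rw [h1, ← Complex.ofReal_cpow (by positivity), Complex.Gamma_ofReal, ← Complex.ofReal_mul]
  congr 1
  rw [one_div, Real.inv_rpow hσ.le, ← Real.rpow_neg hσ.le]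
  congr 2
  ring

lemma JD_real_val {α : ℝ} (hα : α ∈ Set.Ioo (1:ℝ) 2) {σ : ℝ} (hσ : 0 < σ) :
    JD α (σ:ℂ) = ((Real.Gamma (2 - α) / (α - 1) * σ ^ (α - 1) : ℝ) : ℂ) := by
  have hα1 : α - 1 ≠ 0 := by
    have := hα.1; intro h; rw [sub_eq_zero] at h; rw [h] at this; exact lt_irrefl _ this
  set G : ℝ → ℂ := fun σ => JD α (σ:ℂ) - ((Real.Gamma (2 - α) / (α - 1) * σ ^ (α - 1) : ℝ) : ℂ)
    with hG
  have key : ∀ τ ∈ Ioi (0:ℝ), HasDerivAt G 0 τ := by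
    intro τ hτ
    have hτ0 : (0:ℝ) < τ := hτ
    have h1 : HasDerivAt (fun σ : ℝ => JD α (σ:ℂ))
        (((τ ^ (α-2) * Real.Gamma (2-α) : ℝ)):ℂ) τ := by
      have h := JD_hasDeriv hα (s₀ := (τ:ℂ)) (by simpa using hτ0)
      rw [kerDD_integral_real hα hτ0] at h
      exact h.comp_ofReal
    have h2 : HasDerivAt (fun σ : ℝ => (Real.Gamma (2 - α) / (α - 1) * σ ^ (α - 1) : ℝ))
        (Real.Gamma (2 - α) / (α - 1) * ((α - 1) * τ ^ (α - 1 - 1))) τ :=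
      (Real.hasDerivAt_rpow_const (Or.inl hτ0.ne')).const_mul _
    have h3 := h1.sub h2.ofReal_comp
    refine h3.congr_deriv (Eq.symm ?_)
    rw [show α - 1 - 1 = α - 2 by ring]
    rw [show Real.Gamma (2 - α) / (α - 1) * ((α - 1) * τ ^ (α - 2))
        = τ ^ (α-2) * Real.Gamma (2-α) by field_simp]
    ring
  have hconst : ∀ τ ∈ Ioi (0:ℝ), G τ = G σ := by
    intro τ hτ
    exact (convex_Ioi (0:ℝ)).is_const_of_fderivWithin_eq_zero
      (fun z hz => ((key z hz).differentiableAt).differentiableWithinAt)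
      (fun z hz => by
        rw [fderivWithin_of_isOpen isOpen_Ioi hz, (key z hz).hasFDerivAt.fderiv]
        ext
        simp) hτ hσ
  set u : ℕ → ℝ := fun n => 1 / (n + 1) with hu
  have hu_pos : ∀ n, (0:ℝ) < u n := fun n => by positivity
  have hu_lim : Tendsto u atTop (nhds 0) := tendsto_one_div_add_atTop_nhds_zero_nat
  have hJD_lim : Tendsto (fun n => JD α (u n : ℂ)) atTop (nhds 0) := by
    have h0 : (0:ℂ) = ∫ y in Ioi (0:ℝ), (0:ℂ) := by simp
    rw [h0]
    apply tendsto_integral_of_dominated_convergence (bound := bFn α 1 2)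
    · exact fun n => kerD_meas α _
    · exact bFn_int hα 1 2
    · intro n
      filter_upwards [ae_restrict_mem measurableSet_Ioi] with y hy
      apply kerD_bound (by simp [(hu_pos n).le]) _ hy
      rw [Complex.norm_real, Real.norm_eq_abs, abs_of_pos (hu_pos n), hu]
      rw [div_le_one (by positivity)]
      linarith [Nat.cast_nonneg (α := ℝ) n]
    · filter_upwards [ae_restrict_mem measurableSet_Ioi] with y hy
      have hcont : ContinuousAt (fun s : ℂ => kerD α s y) 0 :=
        (kerD_hasDeriv α (mem_Ioi.1 hy) 0).continuousAt
      have hzero : kerD α 0 y = 0 := by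
        unfold kerD
        simp
      have hlim2 : Tendsto (fun n => ((u n : ℝ):ℂ)) atTop (nhds 0) := by
        have := (Complex.continuous_ofReal.tendsto 0).comp hu_lim
        simpa [Function.comp_def] using this
      have := hcont.tendsto.comp hlim2
      rwa [hzero] at this
  have hψ_lim : Tendsto (fun n => ((Real.Gamma (2 - α) / (α - 1) * (u n) ^ (α - 1) : ℝ) : ℂ))
      atTop (nhds 0) := by
    have h1 : Tendsto (fun n => (u n) ^ (α - 1)) atTop (nhds 0) := by
      have hc : ContinuousAt (fun x : ℝ => x ^ (α - 1)) 0 :=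
        Real.continuousAt_rpow_const 0 (α - 1) (Or.inr (by linarith [hα.1]))
      have := hc.tendsto.comp hu_lim
      rwa [Real.zero_rpow (by intro h; rw [sub_eq_zero] at h; exact hα1 (by linarith [h])
        : α - 1 ≠ 0)] at this
    have h2 : Tendsto (fun n => (Real.Gamma (2 - α) / (α - 1) * (u n) ^ (α - 1) : ℝ))
        atTop (nhds 0) := by
      have := h1.const_mul (Real.Gamma (2 - α) / (α - 1))
      simpa using this
    have h3 := (Complex.continuous_ofReal.tendsto 0).comp h2
    rw [show ((0:ℝ):ℂ) = 0 from rfl] at h3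
    apply h3.congr
    intro n
    simp [Function.comp]
  have hG_lim : Tendsto (fun n => G (u n)) atTop (nhds 0) := by
    have := hJD_lim.sub hψ_lim
    simpa [hG] using this
  have hG_const : (fun n => G (u n)) = fun _ => G σ := by
    funext n
    exact hconst (u n) (hu_pos n)
  rw [hG_const] at hG_lim
  have : G σ = 0 := tendsto_nhds_unique tendsto_const_nhds hG_lim
  rw [hG] at this
  simpa [sub_eq_zero] using this

lemma Jfun_one_val {α : ℝ} (hα : α ∈ Set.Ioo (1:ℝ) 2) :
    Jfun α 1 = ((Real.Gamma (-α) : ℝ):ℂ) := by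
  have hα0 : α ≠ 0 := by intro h; rw [h] at hα; exact absurd hα.1 (by norm_num)
  have hα1 : α - 1 ≠ 0 := sub_ne_zero.2 (by intro h; rw [h] at hα; exact absurd hα.1 (by norm_num))
  have hode := Jfun_ode hα (s := 1) (by norm_num)
  have hJD : JD α 1 = ((Real.Gamma (2 - α) / (α - 1) : ℝ):ℂ) := by
    have := JD_real_val hα (σ := 1) one_pos
    rw [Real.one_rpow, mul_one] at this
    simpa using this
  rw [one_mul, hJD] at hode
  have hgamma : Real.Gamma (2 - α) / (α - 1) = α * Real.Gamma (-α) := by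
    have h1 : Real.Gamma (2 - α) = (1 - α) * Real.Gamma (1 - α) := by
      rw [show (2 - α) = (1 - α) + 1 by ring]
      exact Real.Gamma_add_one (by intro h; rw [sub_eq_zero] at h; exact hα1 (by linarith))
    have h2 : Real.Gamma (1 - α) = (-α) * Real.Gamma (-α) := by
      rw [show (1 - α) = (-α) + 1 by ring]
      exact Real.Gamma_add_one (neg_ne_zero.2 hα0)
    rw [h1, h2]
    field_simp
    ring
  rw [hgamma] at hode
  have hαC : ((α:ℝ):ℂ) ≠ 0 := Complex.ofReal_ne_zero.2 hα0
  apply mul_left_cancel₀ hαC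
  rw [← hode]
  push_cast
  ring

lemma cpow_eval {α k : ℝ} (hk : k ≠ 0) :
    (-Complex.I * k) ^ ((α:ℂ))
      = ((|k| ^ α : ℝ):ℂ) * Complex.exp (-Complex.I * (Real.sign k : ℂ) * (π:ℂ) * (α:ℂ) / 2) := by
  have hz : -Complex.I * k ≠ 0 :=
    mul_ne_zero (neg_ne_zero.2 Complex.I_ne_zero) (Complex.ofReal_ne_zero.2 hk)
  have harg : Complex.arg (-Complex.I * k) = -(Real.sign k) * (π/2) := by
    rcases hk.lt_or_gt with hneg | hpos
    · have h1 : -Complex.I * k = ((-k : ℝ):ℂ) * Complex.I := by push_cast; ring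
      rw [h1, Complex.arg_real_mul _ (by linarith : (0:ℝ) < -k), Complex.arg_I,
        Real.sign_of_neg hneg]
      ring
    · have h1 : -Complex.I * k = ((k : ℝ):ℂ) * (-Complex.I) := by push_cast; ring
      rw [h1, Complex.arg_real_mul _ hpos, Complex.arg_neg_I, Real.sign_of_pos hpos]
      ring
  have habs : ‖(-Complex.I * k)‖ = |k| := by
    rw [norm_mul, norm_neg, Complex.norm_I, Complex.norm_real, Real.norm_eq_abs, one_mul]
  rw [Complex.cpow_def_of_ne_zero hz, Complex.log, habs, harg, add_mul, Complex.exp_add]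
  congr 1
  · rw [show ((Real.log |k| :ℝ):ℂ) * (α:ℂ) = ((Real.log |k| * α : ℝ):ℂ) by push_cast; ring,
      ← Complex.ofReal_exp]
    congr 1
    rw [Real.rpow_def_of_pos (abs_pos.2 hk)]
  · congr 1
    push_cast
    ring

lemma Jfun_boundary {α : ℝ} (hα : α ∈ Set.Ioo (1:ℝ) 2) (k : ℝ) :
    Jfun α (-Complex.I * k) = ((Real.Gamma (-α) : ℝ):ℂ) * (-Complex.I * k) ^ ((α:ℂ)) := by
  have hα0 : α ≠ 0 := by intro h; rw [h] at hα; exact absurd hα.1 (by norm_num)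
  by_cases hk : k = 0
  · rw [hk]
    have h1 : -Complex.I * ((0:ℝ):ℂ) = 0 := by simp
    rw [h1, Complex.zero_cpow (by exact_mod_cast hα0), mul_zero, Jfun]
    have : ∀ y ∈ Ioi (0:ℝ), kerf α 0 y = 0 := by
      intro y _
      unfold kerf myf
      simp
    rw [setIntegral_congr_fun measurableSet_Ioi this]
    simp
  -- k ≠ 0
  set sB : ℂ := -Complex.I * k with hsinf
  have him : sB.im ≠ 0 := by
    rw [hsinf]
    simp [Complex.mul_im]
    exact hk
  have hs_ne : sB ≠ 0 := fun h => him (by rw [h]; simp)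
  set u : ℕ → ℝ := fun n => 1 / (n + 1) with hu
  have hu_pos : ∀ n, (0:ℝ) < u n := fun n => by positivity
  have hu_le : ∀ n, u n ≤ 1 := by
    intro n
    rw [hu]
    rw [div_le_one (by positivity)]
    linarith [Nat.cast_nonneg (α := ℝ) n]
  have hu_lim : Tendsto u atTop (nhds 0) := tendsto_one_div_add_atTop_nhds_zero_nat
  set sn : ℕ → ℂ := fun n => (u n : ℂ) + sB with hsn
  have hsn_re : ∀ n, 0 < (sn n).re := by
    intro n
    rw [hsn]
    simp only [Complex.add_re, Complex.ofReal_re]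
    have : sB.re = 0 := by rw [hsinf]; simp [Complex.mul_re]
    rw [this, add_zero]
    exact hu_pos n
  have hsn_lim : Tendsto sn atTop (nhds sB) := by
    have h1 : Tendsto (fun n => ((u n : ℝ):ℂ)) atTop (nhds 0) := by
      have := (Complex.continuous_ofReal.tendsto 0).comp hu_lim
      simpa [Function.comp_def] using this
    have := h1.add_const sB
    simpa using this
  set M : ℝ := 1 + ‖sB‖ with hM
  have hsn_norm : ∀ n, ‖sn n‖ ≤ M := by
    intro n
    rw [hsn]
    calc ‖(u n : ℂ) + sB‖ ≤ ‖((u n : ℝ):ℂ)‖ + ‖sB‖ := norm_add_le _ _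
      _ ≤ M := by
          rw [hM, Complex.norm_real, Real.norm_eq_abs, abs_of_pos (hu_pos n)]
          exact add_le_add_left (hu_le n) _
  have heq : ∀ n, Jfun α (sn n) = ((Real.Gamma (-α) : ℝ):ℂ) * (sn n) ^ ((α:ℂ)) := by
    intro n
    rw [Jfun_eq_cpow hα (hsn_re n), Jfun_one_val hα]
  have hlim1 : Tendsto (fun n => Jfun α (sn n)) atTop (nhds (Jfun α sB)) := by
    rw [Jfun]
    apply tendsto_integral_of_dominated_convergence (bound := bFn α (M^2) (2+M))
    · exact fun n => kerf_meas α _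
    · exact bFn_int hα _ _
    · intro n
      filter_upwards [ae_restrict_mem measurableSet_Ioi] with y hy
      exact kerf_bound hα (hsn_re n).le (hsn_norm n) hy
    · filter_upwards [ae_restrict_mem measurableSet_Ioi] with y hy
      exact ((kerf_hasDeriv α y sB).continuousAt.tendsto).comp hsn_lim
  have hlim2 : Tendsto (fun n => ((Real.Gamma (-α) : ℝ):ℂ) * (sn n) ^ ((α:ℂ))) atTop
      (nhds (((Real.Gamma (-α) : ℝ):ℂ) * sB ^ ((α:ℂ)))) := by
    have hc : ContinuousAt (fun z : ℂ => z ^ ((α:ℂ))) sB :=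
      continuousAt_cpow_const (Complex.mem_slitPlane_iff.2 (Or.inr him))
    exact (hc.tendsto.comp hsn_lim).const_mul _
  have := tendsto_nhds_unique (hlim1.congr (fun n => heq n)) hlim2
  exact this

lemma exp_series_tail (z : ℂ) :
    Complex.exp z - 1 - z = ∑' n : ℕ, z ^ (n+2) / ((n+2).factorial : ℂ) := by
  have hsum : Summable (fun n : ℕ => z ^ n / (n.factorial : ℂ)) := by
    apply Summable.of_norm
    have heq : (fun n : ℕ => ‖z ^ n / (n.factorial : ℂ)‖) = fun n => ‖z‖ ^ n / n.factorial := by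
      funext n
      rw [norm_div, norm_pow]
      congr 1
      simp
    rw [heq]
    exact Real.summable_pow_div_factorial ‖z‖
  have hexp : Complex.exp z = ∑' n : ℕ, z ^ n / (n.factorial : ℂ) := by
    rw [Complex.exp_eq_exp_ℂ, NormedSpace.exp_eq_tsum_div]
  have hsum1 : Summable (fun n : ℕ => z ^ (n+1) / ((n+1).factorial : ℂ)) :=
    (summable_nat_add_iff 1).2 hsum
  have h1 := Summable.tsum_eq_zero_add hsum
  have h2 := Summable.tsum_eq_zero_add hsum1
  rw [hexp, h1, h2]
  have h3 : (∑' n : ℕ, z ^ (n+1+1) / ((n+1+1).factorial : ℂ))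
      = ∑' n : ℕ, z ^ (n+2) / ((n+2).factorial : ℂ) := by
    congr 1
  rw [h3]
  simp [Nat.factorial]

set_option maxHeartbeats 1000000 in
lemma series_part {α a k : ℝ} (hα : α ∈ Set.Ioo (1:ℝ) 2) (ha : 0 < a) :
    ∫ y in Ioc (0:ℝ) a, kerf α (-Complex.I * k) y
      = ∑' n : ℕ, (Complex.I * k) ^ (n + 2) * ((a ^ ((n + 2 : ℝ) - α) : ℝ) : ℂ) /
          ((((n + 2 : ℝ) - α : ℝ) : ℂ) * ((Real.Gamma ((n + 2 : ℝ) + 1) : ℝ) : ℂ)) := by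
  set cC : ℕ → ℂ := fun n => (Complex.I * k) ^ (n + 2) / ((n+2).factorial : ℂ) with hcC
  set g : ℕ → ℝ → ℂ := fun n y => cC n * ((y ^ ((n:ℝ) + 1 - α) : ℝ) : ℂ) with hg
  have hden : ∀ n : ℕ, (0:ℝ) < (n:ℝ) + 2 - α := by
    intro n
    have := hα.2
    have : (0:ℝ) ≤ (n:ℝ) := Nat.cast_nonneg n
    linarith [hα.2]
  -- pointwise identity on Ioc 0 a
  have hpt : ∀ y ∈ Ioc (0:ℝ) a, kerf α (-Complex.I * k) y = ∑' n : ℕ, g n y := by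
    intro y hy
    have hy0 : (0:ℝ) < y := hy.1
    have hker : kerf α (-Complex.I * k) y
        = (Complex.exp (Complex.I * k * y) - 1 - Complex.I * k * y) * ((y ^ (-1 - α) : ℝ) : ℂ) := by
      unfold kerf myf
      ring_nf
    rw [hker, exp_series_tail (Complex.I * k * y), ← tsum_mul_right]
    congr 1
    funext n
    rw [hg, hcC]
    dsimp only
    have h1 : (Complex.I * k * y) ^ (n+2) = (Complex.I * k) ^ (n+2) * ((y:ℂ)) ^ (n+2) := by
      rw [mul_pow]
    have h2 : ((y:ℂ)) ^ (n+2) * ((y ^ (-1 - α) : ℝ) : ℂ) = ((y ^ ((n:ℝ) + 1 - α) : ℝ) : ℂ) := by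
      rw [show ((y:ℂ)) ^ (n+2) = (((y ^ (n+2 : ℕ) : ℝ)):ℂ) by push_cast; ring,
        ← Complex.ofReal_mul]
      congr 1
      rw [← Real.rpow_natCast y (n+2), ← Real.rpow_add hy0]
      congr 1
      push_cast
      ring
    rw [h1]
    rw [div_mul_eq_mul_div, mul_assoc, h2, mul_div_assoc]
    ring
  -- integrability and values
  have hrpow_int : ∀ n : ℕ, IntegrableOn (fun y : ℝ => y ^ ((n:ℝ) + 1 - α)) (Ioc 0 a) := by
    intro n
    have h := intervalIntegral.intervalIntegrable_rpow' (a := 0) (b := a)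
      (r := (n:ℝ) + 1 - α) (by have := hden n; linarith)
    rwa [intervalIntegrable_iff_integrableOn_Ioc_of_le ha.le] at h
  have hrpow_val : ∀ n : ℕ, (∫ y in Ioc (0:ℝ) a, y ^ ((n:ℝ) + 1 - α))
      = a ^ ((n:ℝ) + 2 - α) / ((n:ℝ) + 2 - α) := by
    intro n
    have h := integral_rpow (a := 0) (b := a) (r := (n:ℝ) + 1 - α)
      (Or.inl (by have := hden n; linarith))
    rw [intervalIntegral.integral_of_le ha.le] at h
    rw [h, Real.zero_rpow (by have := hden n; intro hc; rw [show (n:ℝ)+1-α+1 = (n:ℝ)+2-α by ring] at hc; linarith)]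
    rw [show (n:ℝ)+1-α+1 = (n:ℝ)+2-α by ring]
    ring
  have hg_int : ∀ n : ℕ, Integrable (g n) (volume.restrict (Ioc (0:ℝ) a)) := by
    intro n
    exact ((hrpow_int n).ofReal (𝕜 := ℂ)).const_mul (cC n)
  have hg_val : ∀ n : ℕ, (∫ y in Ioc (0:ℝ) a, g n y)
      = cC n * ((a ^ ((n:ℝ) + 2 - α) / ((n:ℝ) + 2 - α) : ℝ) : ℂ) := by
    intro n
    rw [hg]
    dsimp only
    rw [integral_const_mul]
    rw [← hrpow_val n]
    congr 1
    exact integral_ofReal (𝕜 := ℂ) (f := fun y : ℝ => y ^ ((n:ℝ) + 1 - α))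
      (μ := volume.restrict (Ioc (0:ℝ) a))
  -- summability of integrals of norms
  have hnorm_val : ∀ n : ℕ, (∫ y in Ioc (0:ℝ) a, ‖g n y‖)
      = ‖cC n‖ * (a ^ ((n:ℝ) + 2 - α) / ((n:ℝ) + 2 - α)) := by
    intro n
    have : ∀ y ∈ Ioc (0:ℝ) a, ‖g n y‖ = ‖cC n‖ * y ^ ((n:ℝ) + 1 - α) := by
      intro y hy
      rw [hg]
      dsimp only
      rw [norm_mul, Complex.norm_real, Real.norm_eq_abs,
        abs_of_nonneg (Real.rpow_nonneg hy.1.le _)]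
    rw [setIntegral_congr_fun measurableSet_Ioc this, integral_const_mul, hrpow_val n]
  have hsummable : Summable (fun n : ℕ => ∫ y in Ioc (0:ℝ) a, ‖g n y‖) := by
    have hbound : ∀ n : ℕ, (∫ y in Ioc (0:ℝ) a, ‖g n y‖)
        ≤ (a ^ (-α) / (2 - α)) * ((|k| * a) ^ (n + 2) / ((n+2).factorial : ℝ)) := by
      intro n
      rw [hnorm_val n]
      have hcCn : ‖cC n‖ = |k| ^ (n+2) / ((n+2).factorial : ℝ) := by
        rw [hcC]
        dsimp only
        rw [norm_div, norm_pow, norm_mul, Complex.norm_I, one_mul, Complex.norm_real,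
          Real.norm_eq_abs]
        congr 1
        simp
      rw [hcCn]
      have ha1 : a ^ ((n:ℝ) + 2 - α) = a ^ (n + 2 : ℕ) * a ^ (-α) := by
        rw [← Real.rpow_natCast a (n+2), ← Real.rpow_add ha]
        congr 1
        push_cast
        ring
      have h2 : (1:ℝ) / ((n:ℝ) + 2 - α) ≤ 1 / (2 - α) := by
        apply one_div_le_one_div_of_le
        · linarith [hα.2]
        · have : (0:ℝ) ≤ (n:ℝ) := Nat.cast_nonneg n
          linarith
      have hfac : (0:ℝ) < ((n+2).factorial : ℝ) := by positivity
      rw [ha1]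
      rw [show |k| ^ (n+2) / ((n+2).factorial:ℝ) * (a ^ (n+2:ℕ) * a ^ (-α) / ((n:ℝ) + 2 - α))
          = (a ^ (-α) * (|k| ^ (n+2) * a ^ (n+2:ℕ) / ((n+2).factorial:ℝ))) * (1 / ((n:ℝ)+2-α)) by ring]
      rw [show a ^ (-α) / (2-α) * ((|k| * a) ^ (n+2) / ((n+2).factorial:ℝ))
          = (a ^ (-α) * (|k| ^ (n+2) * a ^ (n+2:ℕ) / ((n+2).factorial:ℝ))) * (1 / (2-α)) by
            rw [mul_pow]; ring]
      apply mul_le_mul_of_nonneg_left h2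
      positivity
    apply Summable.of_nonneg_of_le (fun n => by positivity) hbound
    apply Summable.mul_left
    exact (summable_nat_add_iff 2).2 (Real.summable_pow_div_factorial (|k| * a))
  -- swap
  have hswap := MeasureTheory.integral_tsum_of_summable_integral_norm hg_int hsummable
  calc ∫ y in Ioc (0:ℝ) a, kerf α (-Complex.I * k) y
      = ∫ y in Ioc (0:ℝ) a, ∑' n : ℕ, g n y :=
        setIntegral_congr_fun measurableSet_Ioc hpt
    _ = ∑' n : ℕ, ∫ y in Ioc (0:ℝ) a, g n y := hswap.symm
    _ = _ := by
        congr 1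
        funext n
        rw [hg_val n, hcC]
        dsimp only
        have hfac : Real.Gamma ((n + 2 : ℝ) + 1) = ((n+2).factorial : ℝ) := by
          rw [show ((n:ℝ) + 2 + 1) = ((n + 2 : ℕ) : ℝ) + 1 by push_cast; ring]
          exact Real.Gamma_nat_eq_factorial (n+2)
        rw [hfac]
        have hd1 : (((n:ℝ) + 2 - α : ℝ) : ℂ) ≠ 0 := by
          rw [Ne, Complex.ofReal_eq_zero]
          exact (hden n).ne'
        have hd2 : (((n+2).factorial : ℝ) : ℂ) ≠ 0 := by
          rw [Ne, Complex.ofReal_eq_zero]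
          positivity
        rw [Complex.ofReal_div]
        push_cast at hd2 ⊢
        field_simp

theorem stmt_11 (a α k : ℝ) (ha : 0 < a) (hα : α ∈ Set.Ioo (1 : ℝ) 2) :
    (∫ y in Set.Ioi a,
        (Complex.exp (Complex.I * k * y) - 1 - Complex.I * k * y) / ((y ^ (1 + α) : ℝ) : ℂ))
      = ((|k| ^ α * Real.Gamma (-α) : ℝ) : ℂ) *
          Complex.exp (-Complex.I * (Real.sign k : ℂ) * (π : ℂ) * (α : ℂ) / 2)
        - ∑' n : ℕ, (Complex.I * k) ^ (n + 2) * ((a ^ ((n + 2 : ℝ) - α) : ℝ) : ℂ) /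
            ((((n + 2 : ℝ) - α : ℝ) : ℂ) * ((Real.Gamma ((n + 2 : ℝ) + 1) : ℝ) : ℂ)) := by
  have hre : (0:ℝ) ≤ ((-Complex.I * k : ℂ)).re := by
    simp [Complex.mul_re]
  have hint : IntegrableOn (kerf α (-Complex.I * k)) (Ioi (0:ℝ)) := kerf_int hα hre
  -- rewrite integrand
  have hLHS : ∀ y ∈ Ioi a,
      (Complex.exp (Complex.I * k * y) - 1 - Complex.I * k * y) / ((y ^ (1 + α) : ℝ) : ℂ)
        = kerf α (-Complex.I * k) y := by
    intro y hy
    have hy0 : (0:ℝ) < y := lt_trans ha hy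
    unfold kerf myf
    have h1 : ((y ^ (-1 - α) : ℝ) : ℂ) = (((y ^ (1 + α) : ℝ)):ℂ)⁻¹ := by
      rw [show (-1 - α) = -(1 + α) by ring, Real.rpow_neg hy0.le, Complex.ofReal_inv]
    rw [h1, div_eq_mul_inv]
    congr 1
    ring_nf
  rw [setIntegral_congr_fun measurableSet_Ioi hLHS]
  -- split the integral
  have hsplit : Jfun α (-Complex.I * k)
      = (∫ y in Ioc (0:ℝ) a, kerf α (-Complex.I * k) y)
        + ∫ y in Ioi a, kerf α (-Complex.I * k) y := by
    rw [Jfun, ← Ioc_union_Ioi_eq_Ioi ha.le]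
    exact setIntegral_union (Ioc_disjoint_Ioi le_rfl) measurableSet_Ioi
      (hint.mono_set (by rw [← Ioc_union_Ioi_eq_Ioi ha.le]; exact subset_union_left))
      (hint.mono_set (by rw [← Ioc_union_Ioi_eq_Ioi ha.le]; exact subset_union_right))
  have hmain : Jfun α (-Complex.I * k)
      = ((|k| ^ α * Real.Gamma (-α) : ℝ) : ℂ) *
          Complex.exp (-Complex.I * (Real.sign k : ℂ) * (π : ℂ) * (α : ℂ) / 2) := by
    have hα0 : α ≠ 0 := by intro h; rw [h] at hα; exact absurd hα.1 (by norm_num)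
    by_cases hk : k = 0
    · rw [Jfun_boundary hα k, hk]
      have h1 : -Complex.I * ((0:ℝ):ℂ) = 0 := by simp
      rw [h1, Complex.zero_cpow (by exact_mod_cast hα0), mul_zero]
      rw [show |(0:ℝ)| = 0 by simp, Real.zero_rpow hα0]
      simp
    · rw [Jfun_boundary hα k, cpow_eval hk]
      push_cast
      ring
  have := hsplit
  rw [hmain, series_part hα ha] at this
  linear_combination -this
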